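/- Pullback by the twisting map preserves the Schwartz space: if f ∈ 𝒮(ℝ^{n+2}) (Schwartz functions in variables (a, v, ξ), v ∈ ℝⁿ) and θ ∈ ℝ, then the function (a,v,ξ) ↦ f(a, v/cosh(θξ), sinh(2θξ)/(2θ)) is again a Schwartz function. -/

import Mathlib

set_option maxHeartbeats 1600000

open Real SchwartzMap
open scoped ContDiff

noncomputable section TwistAux

/-! ### sech and its iterated derivatives -/

/-- `sech x = (cosh x)⁻¹`. -/
def sechFun (x : ℝ) : ℝ := (Real.cosh x)⁻¹

lemma sechFun_pos (x : ℝ) : 0 < sechFun x := inv_pos.2 (Real.cosh_pos x)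

lemma sechFun_le_one (x : ℝ) : sechFun x ≤ 1 :=
  inv_le_one_of_one_le₀ (Real.one_le_cosh x)

lemma contDiff_sechFun {n : WithTop ℕ∞} : ContDiff ℝ n sechFun :=
  Real.contDiff_cosh.inv fun x => (Real.cosh_pos x).ne'

lemma hasDerivAt_sechFun (x : ℝ) :
    HasDerivAt sechFun (-(Real.tanh x) * sechFun x) x := by
  have h := (Real.hasDerivAt_cosh x).inv (Real.cosh_pos x).ne'
  refine h.congr_deriv ?_
  symm
  rw [Real.tanh_eq_sinh_div_cosh]
  unfold sechFun
  have hc := (Real.cosh_pos x).ne'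
  field_simp

lemma hasDerivAt_tanhFun (x : ℝ) : HasDerivAt Real.tanh (sechFun x ^ 2) x := by
  have h := (Real.hasDerivAt_sinh x).div (Real.hasDerivAt_cosh x) (Real.cosh_pos x).ne'
  have ht : Real.tanh = fun y => Real.sinh y / Real.cosh y :=
    funext fun y => Real.tanh_eq_sinh_div_cosh y
  rw [ht]
  refine h.congr_deriv ?_
  symm
  have hc := Real.cosh_sq_sub_sinh_sq x
  unfold sechFun
  have hne := (Real.cosh_pos x).ne'
  field_simp
  nlinarith [hc]

lemma abs_tanh_le_one (x : ℝ) : |Real.tanh x| ≤ 1 := by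
  rw [Real.tanh_eq_sinh_div_cosh, abs_div, abs_of_pos (Real.cosh_pos x),
    div_le_one (Real.cosh_pos x)]
  nlinarith [Real.cosh_sq_sub_sinh_sq x, abs_nonneg (Real.sinh x), sq_abs (Real.sinh x),
    Real.cosh_pos x]

lemma sechFun_sq (x : ℝ) : sechFun x ^ 2 = 1 - Real.tanh x ^ 2 := by
  rw [Real.tanh_eq_sinh_div_cosh]
  unfold sechFun
  have hc := Real.cosh_sq_sub_sinh_sq x
  have hne := (Real.cosh_pos x).ne'
  field_simp
  linarith

lemma iteratedDeriv_sechFun (m : ℕ) :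
    ∃ P : Polynomial ℝ, ∀ x, iteratedDeriv m sechFun x = P.eval (Real.tanh x) * sechFun x := by
  induction m with
  | zero => exact ⟨1, fun x => by simp⟩
  | succ m ih =>
    obtain ⟨P, hP⟩ := ih
    refine ⟨P.derivative * (1 - Polynomial.X ^ 2) - P * Polynomial.X, fun x => ?_⟩
    rw [iteratedDeriv_succ]
    have hfun : iteratedDeriv m sechFun = fun y => P.eval (Real.tanh y) * sechFun y := funext hP
    rw [hfun]
    have hd : HasDerivAt (fun y => P.eval (Real.tanh y) * sechFun y)
        (Polynomial.eval (Real.tanh x) (Polynomial.derivative P) * sechFun x ^ 2 * sechFun x +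
          P.eval (Real.tanh x) * (-(Real.tanh x) * sechFun x)) x :=
      (((P.hasDerivAt (Real.tanh x)).comp x (hasDerivAt_tanhFun x))).mul (hasDerivAt_sechFun x)
    rw [hd.deriv]
    simp only [Polynomial.eval_mul, Polynomial.eval_sub, Polynomial.eval_one, Polynomial.eval_pow,
      Polynomial.eval_X, sechFun_sq]
    ring

lemma sechFun_deriv_bound (m : ℕ) :
    ∃ C : ℝ, 0 ≤ C ∧ ∀ i ≤ m, ∀ x : ℝ, ‖iteratedDeriv i sechFun x‖ ≤ C := by
  induction m with
  | zero =>
    refine ⟨1, zero_le_one, fun i hi x => ?_⟩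
    interval_cases i
    simp only [iteratedDeriv_zero, Real.norm_eq_abs, abs_of_pos (sechFun_pos x)]
    exact sechFun_le_one x
  | succ m ih =>
    obtain ⟨C, hC0, hC⟩ := ih
    obtain ⟨P, hP⟩ := iteratedDeriv_sechFun (m + 1)
    obtain ⟨C', hC'⟩ := (isCompact_Icc (a := (-1 : ℝ)) (b := 1)).exists_bound_of_continuousOn
      (Polynomial.continuous P).continuousOn
    have hC'0 : 0 ≤ C' := le_trans (norm_nonneg _) (hC' 0 (by norm_num))
    refine ⟨max C C', le_trans hC0 (le_max_left _ _), fun i hi x => ?_⟩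
    rcases lt_or_eq_of_le hi with h | h
    · exact le_trans (hC i (Nat.lt_succ_iff.mp h) x) (le_max_left _ _)
    · subst h
      rw [hP x]
      have h1 : ‖Polynomial.eval (Real.tanh x) P‖ ≤ C' :=
        hC' _ (abs_le.mp (abs_tanh_le_one x))
      calc ‖Polynomial.eval (Real.tanh x) P * sechFun x‖
          = ‖Polynomial.eval (Real.tanh x) P‖ * ‖sechFun x‖ := norm_mul _ _
        _ ≤ C' * 1 := by
            apply mul_le_mul h1 _ (norm_nonneg _) hC'0
            rw [Real.norm_eq_abs, abs_of_pos (sechFun_pos x)]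
            exact sechFun_le_one x
        _ ≤ max C C' := by rw [mul_one]; exact le_max_right _ _

/-! ### iterated derivatives of `sinh (c * x)` -/

lemma iteratedDeriv_sinh_const_mul (c : ℝ) (m : ℕ) :
    iteratedDeriv m (fun x => Real.sinh (c * x) / c) =
      fun x => if Even m then c ^ m * Real.sinh (c * x) / c
        else c ^ m * Real.cosh (c * x) / c := by
  induction m with
  | zero => simp
  | succ m ih =>
    rw [iteratedDeriv_succ, ih]
    funext x
    have hlin : HasDerivAt (fun y : ℝ => c * y) c x := by
      simpa using (hasDerivAt_id x).const_mul c
    rcases Nat.even_or_odd m with hm | hm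
    · have heq : (fun y => if Even m then c ^ m * Real.sinh (c * y) / c
          else c ^ m * Real.cosh (c * y) / c) = fun y => c ^ m * Real.sinh (c * y) / c := by
        funext y; rw [if_pos hm]
      rw [heq]
      have hd : HasDerivAt (fun y => c ^ m * Real.sinh (c * y) / c)
          (c ^ m * (Real.cosh (c * x) * c) / c) x :=
        ((((Real.hasDerivAt_sinh (c * x)).comp x hlin)).const_mul _).div_const _
      rw [hd.deriv, if_neg (by simp [Nat.even_add_one, hm])]
      ring
    · have heq : (fun y => if Even m then c ^ m * Real.sinh (c * y) / c
          else c ^ m * Real.cosh (c * y) / c) = fun y => c ^ m * Real.cosh (c * y) / c := by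
        funext y; rw [if_neg (Nat.not_even_iff_odd.mpr hm)]
      rw [heq]
      have hd : HasDerivAt (fun y => c ^ m * Real.cosh (c * y) / c)
          (c ^ m * (Real.sinh (c * x) * c) / c) x :=
        ((((Real.hasDerivAt_cosh (c * x)).comp x hlin)).const_mul _).div_const _
      rw [hd.deriv, if_pos (Nat.even_add_one.mpr (Nat.not_even_iff_odd.mpr hm))]
      ring

lemma abs_sinh_le_cosh (t : ℝ) : |Real.sinh t| ≤ Real.cosh t := by
  nlinarith [Real.cosh_sq_sub_sinh_sq t, sq_abs (Real.sinh t), abs_nonneg (Real.sinh t),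
    Real.cosh_pos t]

lemma cosh_le_exp_abs (t : ℝ) : Real.cosh t ≤ Real.exp |t| := by
  rw [Real.cosh_eq]
  have h1 : Real.exp t ≤ Real.exp |t| := Real.exp_le_exp.2 (le_abs_self t)
  have h2 : Real.exp (-t) ≤ Real.exp |t| := Real.exp_le_exp.2 (neg_le_abs t)
  linarith

lemma cosh_le_one_add_abs_sinh (t : ℝ) : Real.cosh t ≤ 1 + |Real.sinh t| := by
  nlinarith [Real.cosh_sq_sub_sinh_sq t, sq_abs (Real.sinh t), abs_nonneg (Real.sinh t),
    Real.cosh_pos t]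

lemma exp_abs_le_two_mul_cosh (t : ℝ) : Real.exp |t| ≤ 2 * Real.cosh t := by
  rw [Real.cosh_eq]
  rcases abs_cases t with ⟨h, _⟩ | ⟨h, _⟩ <;> rw [h] <;>
    nlinarith [Real.exp_pos t, Real.exp_pos (-t)]


lemma phi_deriv_bound (θ : ℝ) (hθ : θ ≠ 0) (m : ℕ) :
    ∃ C : ℝ, 0 ≤ C ∧ ∀ i ≤ m, ∀ x : ℝ,
      ‖iteratedDeriv i (fun ξ => Real.sinh (2 * θ * ξ) / (2 * θ)) x‖ ≤
        C * Real.exp (2 * |θ| * |x|) := by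
  have h2θ : |2 * θ| ≠ 0 := abs_ne_zero.mpr (mul_ne_zero two_ne_zero hθ)
  have h2θ' : 0 < |2 * θ| := (abs_nonneg _).lt_of_ne' h2θ
  refine ⟨|2 * θ|⁻¹ * max 1 |2 * θ| ^ m, by positivity, fun i hi x => ?_⟩
  rw [iteratedDeriv_sinh_const_mul]
  have habs : |2 * θ * x| = 2 * |θ| * |x| := by
    rw [abs_mul, abs_mul, abs_two]
  have hpow : |2 * θ| ^ i ≤ max 1 |2 * θ| ^ m :=
    le_trans (pow_le_pow_left₀ (abs_nonneg _) (le_max_right _ _) i)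
      (pow_le_pow_right₀ (le_max_left _ _) hi)
  have hb : ∀ y : ℝ, |y| ≤ Real.cosh (2 * θ * x) → ‖(2 * θ) ^ i * y / (2 * θ)‖ ≤
      |2 * θ|⁻¹ * max 1 |2 * θ| ^ m * Real.exp (2 * |θ| * |x|) := by
    intro y hy
    rw [Real.norm_eq_abs, abs_div, abs_mul, abs_pow]
    have hcosh : Real.cosh (2 * θ * x) ≤ Real.exp (2 * |θ| * |x|) := by
      rw [← habs]; exact cosh_le_exp_abs _
    rw [div_eq_inv_mul]
    calc |2 * θ|⁻¹ * (|2 * θ| ^ i * |y|)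
        ≤ |2 * θ|⁻¹ * (max 1 |2 * θ| ^ m * Real.exp (2 * |θ| * |x|)) := by
          apply mul_le_mul_of_nonneg_left _ (by positivity)
          exact mul_le_mul hpow (le_trans hy hcosh) (abs_nonneg _) (by positivity)
      _ = |2 * θ|⁻¹ * max 1 |2 * θ| ^ m * Real.exp (2 * |θ| * |x|) := by ring
  by_cases he : Even i
  · simp only [if_pos he]; exact hb _ (abs_sinh_le_cosh _)
  · simp only [if_neg he]
    exact hb _ (le_of_eq (abs_of_pos (Real.cosh_pos _)))

lemma clm_iteratedFDeriv_norm_le {E F : Type*} [NormedAddCommGroup E] [NormedSpace ℝ E]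
    [NormedAddCommGroup F] [NormedSpace ℝ F] (L : E →L[ℝ] F) (k : ℕ) (p : E) :
    ‖iteratedFDeriv ℝ k (⇑L) p‖ ≤ ‖L‖ * (1 + ‖p‖) := by
  have h1p : (0:ℝ) ≤ 1 + ‖p‖ := by positivity
  match k with
  | 0 =>
    rw [norm_iteratedFDeriv_zero]
    calc ‖L p‖ ≤ ‖L‖ * ‖p‖ := L.le_opNorm p
      _ ≤ ‖L‖ * (1 + ‖p‖) := by
          apply mul_le_mul_of_nonneg_left _ (norm_nonneg _); linarith
  | (k+1) =>
    rw [← norm_iteratedFDeriv_fderiv]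
    have hfd : fderiv ℝ (⇑L) = fun _ => L := funext fun x => L.fderiv
    rw [hfd]
    match k with
    | 0 =>
      rw [norm_iteratedFDeriv_zero]
      exact le_mul_of_one_le_right (norm_nonneg _) (by linarith [norm_nonneg p])
    | (k+1) =>
      rw [iteratedFDeriv_const_of_ne (Nat.succ_ne_zero k)]
      simp only [Pi.zero_apply, norm_zero]
      positivity

end TwistAux

/-- `φ_θ(ξ) := sinh(2θξ)/(2θ)` for `θ ≠ 0`, and `φ₀ = id`. -/
noncomputable def phiMap (θ ξ : ℝ) : ℝ :=
  if θ = 0 then ξ else Real.sinh (2 * θ * ξ) / (2 * θ)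

/-- The twisting map `(a,v,ξ) ↦ (a, v/cosh(θξ), sinh(2θξ)/(2θ))`. -/
noncomputable def twist {V : Type*} [AddCommGroup V] [Module ℝ V] (θ : ℝ)
    (p : ℝ × V × ℝ) : ℝ × V × ℝ :=
  (p.1, (Real.cosh (θ * p.2.2))⁻¹ • p.2.1, phiMap θ p.2.2)

noncomputable section TwistMain

variable {V : Type*} [NormedAddCommGroup V] [NormedSpace ℝ V]

/-- second component projection -/
def pi2c (V : Type*) [NormedAddCommGroup V] [NormedSpace ℝ V] : (ℝ × V × ℝ) →L[ℝ] V :=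
  (ContinuousLinearMap.fst ℝ V ℝ).comp (ContinuousLinearMap.snd ℝ ℝ (V × ℝ))

/-- third component projection -/
def pi3c (V : Type*) [NormedAddCommGroup V] [NormedSpace ℝ V] : (ℝ × V × ℝ) →L[ℝ] ℝ :=
  (ContinuousLinearMap.snd ℝ V ℝ).comp (ContinuousLinearMap.snd ℝ ℝ (V × ℝ))

/-- embedding of the first component -/
def j1c (V : Type*) [NormedAddCommGroup V] [NormedSpace ℝ V] :
    (ℝ × V × ℝ) →L[ℝ] (ℝ × V × ℝ) :=
  (ContinuousLinearMap.inl ℝ ℝ (V × ℝ)).comp (ContinuousLinearMap.fst ℝ ℝ (V × ℝ))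

/-- embedding of the second component -/
def j2c (V : Type*) [NormedAddCommGroup V] [NormedSpace ℝ V] : V →L[ℝ] (ℝ × V × ℝ) :=
  (ContinuousLinearMap.inr ℝ ℝ (V × ℝ)).comp (ContinuousLinearMap.inl ℝ V ℝ)

/-- embedding of the third component -/
def j3c (V : Type*) [NormedAddCommGroup V] [NormedSpace ℝ V] : ℝ →L[ℝ] (ℝ × V × ℝ) :=
  (ContinuousLinearMap.inr ℝ ℝ (V × ℝ)).comp (ContinuousLinearMap.inr ℝ V ℝ)

lemma pi2c_norm_le : ‖pi2c V‖ ≤ 1 := by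
  apply ContinuousLinearMap.opNorm_le_bound _ zero_le_one
  intro p
  rw [one_mul]
  exact le_trans (norm_fst_le p.2) (norm_snd_le p)

lemma pi3c_norm_le : ‖pi3c V‖ ≤ 1 := by
  apply ContinuousLinearMap.opNorm_le_bound _ zero_le_one
  intro p
  rw [one_mul]
  exact le_trans (norm_snd_le p.2) (norm_snd_le p)

lemma j1c_norm_le : ‖j1c V‖ ≤ 1 := by
  apply ContinuousLinearMap.opNorm_le_bound _ zero_le_one
  intro p
  rw [one_mul]
  have : (j1c V) p = ((p.1 : ℝ), (0 : V × ℝ)) := rfl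
  rw [this, Prod.norm_def]
  simp only [norm_zero]
  exact max_le (norm_fst_le p) (norm_nonneg p)

lemma j2c_norm_le : ‖j2c V‖ ≤ 1 := by
  apply ContinuousLinearMap.opNorm_le_bound _ zero_le_one
  intro v
  rw [one_mul]
  have : (j2c V) v = ((0 : ℝ), ((v : V), (0:ℝ))) := rfl
  rw [this, Prod.norm_def, Prod.norm_def]
  simp only [norm_zero]
  exact max_le (norm_nonneg v) (max_le le_rfl (norm_nonneg v))

lemma j3c_norm_le : ‖j3c V‖ ≤ 1 := by
  apply ContinuousLinearMap.opNorm_le_bound _ zero_le_one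
  intro t
  rw [one_mul]
  have : (j3c V) t = ((0 : ℝ), ((0 : V), t)) := rfl
  rw [this, Prod.norm_def, Prod.norm_def]
  simp only [norm_zero]
  exact max_le (norm_nonneg t) (max_le (norm_nonneg t) le_rfl)

lemma twist_contDiff {n : WithTop ℕ∞} (θ : ℝ) (hθ : θ ≠ 0) :
    ContDiff ℝ n (twist (V := V) θ) := by
  have hξ : ContDiff ℝ n (fun p : ℝ × V × ℝ => p.2.2) := contDiff_snd.comp contDiff_snd
  have htw : twist (V := V) θ =
      fun p => (p.1, ((Real.cosh (θ * p.2.2))⁻¹ • p.2.1, phiMap θ p.2.2)) := rfl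
  rw [htw]
  apply ContDiff.prodMk contDiff_fst
  apply ContDiff.prodMk
  · exact (contDiff_sechFun.comp (contDiff_const.mul hξ)).smul (contDiff_fst.comp contDiff_snd)
  · have h1 : ContDiff ℝ n (fun ξ : ℝ => Real.sinh (2 * θ * ξ) / (2 * θ)) :=
      (Real.contDiff_sinh.comp (contDiff_const.mul contDiff_id)).div_const _
    have hphi : phiMap θ = fun ξ => Real.sinh (2 * θ * ξ) / (2 * θ) :=
      funext fun ξ => by simp [phiMap, hθ]
    rw [hphi]
    exact h1.comp hξ

lemma twist_decomp (θ : ℝ) (hθ : θ ≠ 0) :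
    twist (V := V) θ = ⇑(j1c V) +
      ((⇑(j2c V) ∘ fun p => sechFun (θ * (pi3c V) p) • (pi2c V) p) +
        (⇑(j3c V) ∘ (fun ξ => Real.sinh (2 * θ * ξ) / (2 * θ)) ∘ ⇑(pi3c V))) := by
  funext p
  have h1 : (j1c V) p = ((p.1 : ℝ), ((0 : V), (0:ℝ))) := rfl
  have h2 : ∀ v : V, (j2c V) v = ((0 : ℝ), ((v : V), (0:ℝ))) := fun v => rfl
  have h3 : ∀ t : ℝ, (j3c V) t = ((0 : ℝ), ((0 : V), t)) := fun t => rfl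
  simp only [Pi.add_apply, Function.comp_apply, h1, h2, h3, Prod.mk_add_mk, add_zero, zero_add]
  have hp2 : (pi2c V) p = p.2.1 := rfl
  have hp3 : (pi3c V) p = p.2.2 := rfl
  rw [hp2, hp3]
  simp [twist, phiMap, hθ, sechFun]

lemma twist_iteratedFDeriv_bound (θ : ℝ) (hθ : θ ≠ 0) (m : ℕ) :
    ∃ K : ℝ, 1 ≤ K ∧ ∀ i ≤ m, ∀ p : ℝ × V × ℝ,
      ‖iteratedFDeriv ℝ i (twist (V := V) θ) p‖ ≤
        K * ((1 + ‖p‖) * Real.exp (2 * |θ| * |p.2.2|)) := by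
  obtain ⟨Cs, hCs0, hCs⟩ := sechFun_deriv_bound m
  obtain ⟨Cφ, hCφ0, hCφ⟩ := phi_deriv_bound θ hθ m
  set Ls : (ℝ × V × ℝ) →L[ℝ] ℝ := θ • pi3c V with hLsdef
  have hLs : ‖Ls‖ ≤ |θ| := by
    apply ContinuousLinearMap.opNorm_le_bound _ (abs_nonneg θ)
    intro q
    rw [hLsdef, ContinuousLinearMap.smul_apply, norm_smul, Real.norm_eq_abs]
    apply mul_le_mul_of_nonneg_left _ (abs_nonneg θ)
    have hq : (pi3c V) q = q.2.2 := rfl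
    rw [hq]
    exact le_trans (norm_snd_le q.2) (norm_snd_le q)
  set Cs' : ℝ := Cs * max 1 |θ| ^ m with hCs'def
  have hCs'0 : 0 ≤ Cs' := by positivity
  -- bound on the iterated derivatives of sech ∘ Ls
  have hsθ : ∀ j ≤ m, ∀ p : ℝ × V × ℝ,
      ‖iteratedFDeriv ℝ j (sechFun ∘ ⇑Ls) p‖ ≤ Cs' := by
    intro j hj p
    rw [Ls.iteratedFDeriv_comp_right (contDiff_sechFun (n := (j : WithTop ℕ∞))) p le_rfl]
    calc ‖(iteratedFDeriv ℝ j sechFun (Ls p)).compContinuousLinearMap fun _ => Ls‖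
        ≤ ‖iteratedFDeriv ℝ j sechFun (Ls p)‖ * ∏ _x : Fin j, ‖Ls‖ :=
          ContinuousMultilinearMap.norm_compContinuousLinearMap_le _ _
      _ ≤ Cs * max 1 |θ| ^ m := by
          apply mul_le_mul
          · rw [norm_iteratedFDeriv_eq_norm_iteratedDeriv]
            exact hCs j hj _
          · rw [Finset.prod_const]
            simp only [Finset.card_univ, Fintype.card_fin]
            exact le_trans (pow_le_pow_left₀ (norm_nonneg _) (hLs.trans (le_max_right _ _)) j)
              (pow_le_pow_right₀ (le_max_left _ _) hj)
          · positivity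
          · exact hCs0
  refine ⟨1 + 2 ^ m * Cs' + Cφ, by nlinarith [hCs'0, hCφ0, (by positivity : (0:ℝ) ≤ 2 ^ m * Cs')], fun i hi p => ?_⟩
  have hF2 : ContDiff ℝ (i : WithTop ℕ∞) (fun p : ℝ × V × ℝ => sechFun (θ * (pi3c V) p) • (pi2c V) p) := by
    have : ContDiff ℝ (i : WithTop ℕ∞) (sechFun ∘ ⇑Ls) := contDiff_sechFun.comp Ls.contDiff
    exact this.smul (pi2c V).contDiff
  have hφcd : ContDiff ℝ (i : WithTop ℕ∞) (fun ξ : ℝ => Real.sinh (2 * θ * ξ) / (2 * θ)) :=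
    (Real.contDiff_sinh.comp (contDiff_const.mul contDiff_id)).div_const _
  have hF3 : ContDiff ℝ (i : WithTop ℕ∞)
      (⇑(j3c V) ∘ (fun ξ : ℝ => Real.sinh (2 * θ * ξ) / (2 * θ)) ∘ ⇑(pi3c V)) :=
    (j3c V).contDiff.comp (hφcd.comp (pi3c V).contDiff)
  have hF2' : ContDiff ℝ (i : WithTop ℕ∞)
      (⇑(j2c V) ∘ fun p : ℝ × V × ℝ => sechFun (θ * (pi3c V) p) • (pi2c V) p) :=
    (j2c V).contDiff.comp hF2
  have hexp1 : (1:ℝ) ≤ Real.exp (2 * |θ| * |p.2.2|) := Real.one_le_exp (by positivity)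
  have hp1 : (1:ℝ) ≤ 1 + ‖p‖ := by linarith [norm_nonneg p]
  -- the three pieces
  have b1 : ‖iteratedFDeriv ℝ i (⇑(j1c V)) p‖ ≤ 1 + ‖p‖ := by
    calc ‖iteratedFDeriv ℝ i (⇑(j1c V)) p‖ ≤ ‖j1c V‖ * (1 + ‖p‖) :=
        clm_iteratedFDeriv_norm_le _ i p
      _ ≤ 1 * (1 + ‖p‖) := mul_le_mul_of_nonneg_right j1c_norm_le (by linarith)
      _ = 1 + ‖p‖ := one_mul _
  have b2 : ‖iteratedFDeriv ℝ i
      (⇑(j2c V) ∘ fun p : ℝ × V × ℝ => sechFun (θ * (pi3c V) p) • (pi2c V) p) p‖ ≤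
      2 ^ m * Cs' * (1 + ‖p‖) := by
    rw [(j2c V).iteratedFDeriv_comp_left hF2.contDiffAt le_rfl]
    calc ‖(j2c V).compContinuousMultilinearMap
          (iteratedFDeriv ℝ i (fun p : ℝ × V × ℝ => sechFun (θ * (pi3c V) p) • (pi2c V) p) p)‖
        ≤ ‖j2c V‖ * ‖iteratedFDeriv ℝ i
            (fun p : ℝ × V × ℝ => sechFun (θ * (pi3c V) p) • (pi2c V) p) p‖ :=
          ContinuousLinearMap.norm_compContinuousMultilinearMap_le _ _
      _ ≤ 1 * ‖iteratedFDeriv ℝ i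
            (fun p : ℝ × V × ℝ => sechFun (θ * (pi3c V) p) • (pi2c V) p) p‖ :=
          mul_le_mul_of_nonneg_right j2c_norm_le (norm_nonneg _)
      _ = ‖iteratedFDeriv ℝ i (fun p : ℝ × V × ℝ => (sechFun ∘ ⇑Ls) p • (pi2c V) p) p‖ := by
          rw [one_mul]; rfl
      _ ≤ ∑ j ∈ Finset.range (i + 1), (i.choose j : ℝ) *
            ‖iteratedFDeriv ℝ j (sechFun ∘ ⇑Ls) p‖ * ‖iteratedFDeriv ℝ (i - j) (⇑(pi2c V)) p‖ :=
          norm_iteratedFDeriv_smul_le (contDiff_sechFun.comp Ls.contDiff) (pi2c V).contDiff p le_rfl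
      _ ≤ ∑ j ∈ Finset.range (i + 1), (i.choose j : ℝ) * (Cs' * (1 + ‖p‖)) := by
          apply Finset.sum_le_sum
          intro j hj
          rw [mul_assoc]
          apply mul_le_mul_of_nonneg_left _ (by positivity)
          have hjm : j ≤ m := le_trans (Nat.lt_succ_iff.mp (Finset.mem_range.mp hj)) hi
          apply mul_le_mul (hsθ j hjm p) _ (norm_nonneg _) hCs'0
          calc ‖iteratedFDeriv ℝ (i - j) (⇑(pi2c V)) p‖ ≤ ‖pi2c V‖ * (1 + ‖p‖) :=
              clm_iteratedFDeriv_norm_le _ _ p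
            _ ≤ 1 * (1 + ‖p‖) := mul_le_mul_of_nonneg_right pi2c_norm_le (by linarith)
            _ = 1 + ‖p‖ := one_mul _
      _ = (∑ j ∈ Finset.range (i + 1), (i.choose j : ℝ)) * (Cs' * (1 + ‖p‖)) :=
          (Finset.sum_mul _ _ _).symm
      _ ≤ 2 ^ m * Cs' * (1 + ‖p‖) := by
          have hsum : (∑ j ∈ Finset.range (i + 1), (i.choose j : ℝ)) = 2 ^ i := by
            norm_cast
            exact Nat.sum_range_choose i
          rw [hsum, ← mul_assoc]
          apply mul_le_mul_of_nonneg_right _ (by linarith)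
          apply mul_le_mul_of_nonneg_right _ hCs'0
          exact pow_le_pow_right₀ one_le_two hi
  have b3 : ‖iteratedFDeriv ℝ i
      (⇑(j3c V) ∘ (fun ξ : ℝ => Real.sinh (2 * θ * ξ) / (2 * θ)) ∘ ⇑(pi3c V)) p‖ ≤
      Cφ * Real.exp (2 * |θ| * |p.2.2|) := by
    rw [(j3c V).iteratedFDeriv_comp_left (hφcd.comp (pi3c V).contDiff).contDiffAt le_rfl]
    calc ‖(j3c V).compContinuousMultilinearMap
          (iteratedFDeriv ℝ i ((fun ξ : ℝ => Real.sinh (2 * θ * ξ) / (2 * θ)) ∘ ⇑(pi3c V)) p)‖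
        ≤ ‖j3c V‖ * ‖iteratedFDeriv ℝ i
            ((fun ξ : ℝ => Real.sinh (2 * θ * ξ) / (2 * θ)) ∘ ⇑(pi3c V)) p‖ :=
          ContinuousLinearMap.norm_compContinuousMultilinearMap_le _ _
      _ ≤ 1 * ‖iteratedFDeriv ℝ i
            ((fun ξ : ℝ => Real.sinh (2 * θ * ξ) / (2 * θ)) ∘ ⇑(pi3c V)) p‖ :=
          mul_le_mul_of_nonneg_right j3c_norm_le (norm_nonneg _)
      _ = ‖iteratedFDeriv ℝ i ((fun ξ : ℝ => Real.sinh (2 * θ * ξ) / (2 * θ)) ∘ ⇑(pi3c V)) p‖ :=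
          one_mul _
      _ ≤ Cφ * Real.exp (2 * |θ| * |p.2.2|) := by
          rw [(pi3c V).iteratedFDeriv_comp_right hφcd p le_rfl]
          calc ‖(iteratedFDeriv ℝ i (fun ξ : ℝ => Real.sinh (2 * θ * ξ) / (2 * θ))
                ((pi3c V) p)).compContinuousLinearMap fun _ => pi3c V‖
              ≤ ‖iteratedFDeriv ℝ i (fun ξ : ℝ => Real.sinh (2 * θ * ξ) / (2 * θ))
                  ((pi3c V) p)‖ * ∏ _x : Fin i, ‖pi3c V‖ :=
                ContinuousMultilinearMap.norm_compContinuousLinearMap_le _ _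
            _ ≤ (Cφ * Real.exp (2 * |θ| * |p.2.2|)) * 1 := by
                apply mul_le_mul
                · rw [norm_iteratedFDeriv_eq_norm_iteratedDeriv]
                  exact hCφ i hi p.2.2
                · exact Finset.prod_le_one (fun _ _ => norm_nonneg _) (fun _ _ => pi3c_norm_le)
                · positivity
                · positivity
            _ = Cφ * Real.exp (2 * |θ| * |p.2.2|) := mul_one _
  have hF23 : ContDiff ℝ (i : WithTop ℕ∞)
      ((⇑(j2c V) ∘ fun p : ℝ × V × ℝ => sechFun (θ * (pi3c V) p) • (pi2c V) p) +
        (⇑(j3c V) ∘ (fun ξ : ℝ => Real.sinh (2 * θ * ξ) / (2 * θ)) ∘ ⇑(pi3c V))) :=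
    hF2'.add hF3
  rw [twist_decomp θ hθ, iteratedFDeriv_add_apply (j1c V).contDiff.contDiffAt hF23.contDiffAt,
    iteratedFDeriv_add_apply hF2'.contDiffAt hF3.contDiffAt]
  apply le_trans (norm_add_le _ _)
  apply le_trans (add_le_add b1 (le_trans (norm_add_le _ _) (add_le_add b2 b3)))
  have h1 : (0:ℝ) ≤ (1 + ‖p‖) * (Real.exp (2 * |θ| * |p.2.2|) - 1) := by nlinarith
  have h2 : (0:ℝ) ≤ (2 ^ m * Cs') * ((1 + ‖p‖) * (Real.exp (2 * |θ| * |p.2.2|) - 1)) := by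
    apply mul_nonneg (by positivity) h1
  have h3 : (0:ℝ) ≤ Cφ * (Real.exp (2 * |θ| * |p.2.2|) * (1 + ‖p‖ - 1)) := by
    apply mul_nonneg hCφ0 (mul_nonneg (by positivity) (by linarith))
  nlinarith [h1, h2, h3]

lemma twist_fst (θ : ℝ) (p : ℝ × V × ℝ) : (twist (V := V) θ p).1 = p.1 := rfl

lemma twist_snd_snd (θ : ℝ) (hθ : θ ≠ 0) (p : ℝ × V × ℝ) :
    (twist (V := V) θ p).2.2 = Real.sinh (2 * θ * p.2.2) / (2 * θ) := by
  simp [twist, phiMap, hθ]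

lemma abs_sinh_le_twist (θ : ℝ) (hθ : θ ≠ 0) (p : ℝ × V × ℝ) :
    |Real.sinh (2 * θ * p.2.2)| ≤ 2 * |θ| * ‖twist (V := V) θ p‖ := by
  have h2θ : (0:ℝ) < |2 * θ| := abs_pos.mpr (mul_ne_zero two_ne_zero hθ)
  have h2 : |(twist (V := V) θ p).2.2| ≤ ‖twist (V := V) θ p‖ := by
    rw [← Real.norm_eq_abs]
    exact le_trans (norm_snd_le _) (norm_snd_le _)
  rw [twist_snd_snd θ hθ p, abs_div] at h2
  have := (div_le_iff₀ h2θ).mp h2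
  calc |Real.sinh (2 * θ * p.2.2)| ≤ ‖twist (V := V) θ p‖ * |2 * θ| := this
    _ = 2 * |θ| * ‖twist (V := V) θ p‖ := by rw [abs_mul, abs_two]; ring

lemma exp_le_twist (θ : ℝ) (hθ : θ ≠ 0) (p : ℝ × V × ℝ) :
    Real.exp (2 * |θ| * |p.2.2|) ≤ (2 + 4 * |θ|) * (1 + ‖twist (V := V) θ p‖) := by
  have habs : |2 * θ * p.2.2| = 2 * |θ| * |p.2.2| := by rw [abs_mul, abs_mul, abs_two]
  have h1 := abs_sinh_le_twist θ hθ p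
  have hT0 : (0:ℝ) ≤ ‖twist (V := V) θ p‖ := norm_nonneg _
  calc Real.exp (2 * |θ| * |p.2.2|) = Real.exp |2 * θ * p.2.2| := by rw [habs]
    _ ≤ 2 * Real.cosh (2 * θ * p.2.2) := exp_abs_le_two_mul_cosh _
    _ ≤ 2 * (1 + |Real.sinh (2 * θ * p.2.2)|) := by
        have := cosh_le_one_add_abs_sinh (2 * θ * p.2.2); linarith
    _ ≤ 2 * (1 + 2 * |θ| * ‖twist (V := V) θ p‖) := by linarith
    _ ≤ (2 + 4 * |θ|) * (1 + ‖twist (V := V) θ p‖) := by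
        nlinarith [abs_nonneg θ, mul_nonneg (abs_nonneg θ) hT0]

lemma cosh_le_twist (θ : ℝ) (hθ : θ ≠ 0) (p : ℝ × V × ℝ) :
    Real.cosh (θ * p.2.2) ≤ (1 + 2 * |θ|) * (1 + ‖twist (V := V) θ p‖) := by
  have h1 := abs_sinh_le_twist θ hθ p
  have hT0 : (0:ℝ) ≤ ‖twist (V := V) θ p‖ := norm_nonneg _
  have hc2 : Real.cosh (θ * p.2.2) ^ 2 ≤ Real.cosh (2 * θ * p.2.2) := by
    have heq : 2 * θ * p.2.2 = 2 * (θ * p.2.2) := by ring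
    rw [heq, Real.cosh_two_mul]
    nlinarith [sq_nonneg (Real.sinh (θ * p.2.2))]
  have hc3 : Real.cosh (2 * θ * p.2.2) ≤ 1 + 2 * |θ| * ‖twist (V := V) θ p‖ := by
    have := cosh_le_one_add_abs_sinh (2 * θ * p.2.2); linarith
  have hone := Real.one_le_cosh (θ * p.2.2)
  nlinarith [sq_nonneg (Real.cosh (θ * p.2.2) - 1), mul_nonneg (abs_nonneg θ) hT0, hT0,
    abs_nonneg θ]

lemma norm_v_le_twist (θ : ℝ) (hθ : θ ≠ 0) (p : ℝ × V × ℝ) :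
    ‖p.2.1‖ ≤ ((1 + 2 * |θ|) * (1 + ‖twist (V := V) θ p‖)) * (1 + ‖twist (V := V) θ p‖) := by
  have hc : (0:ℝ) < Real.cosh (θ * p.2.2) := Real.cosh_pos _
  have hw : (twist (V := V) θ p).2.1 = (Real.cosh (θ * p.2.2))⁻¹ • p.2.1 := rfl
  have hwn : ‖(twist (V := V) θ p).2.1‖ = (Real.cosh (θ * p.2.2))⁻¹ * ‖p.2.1‖ := by
    rw [hw, norm_smul, Real.norm_eq_abs, abs_of_pos (inv_pos.mpr hc)]
  have hv : ‖p.2.1‖ = Real.cosh (θ * p.2.2) * ‖(twist (V := V) θ p).2.1‖ := by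
    rw [hwn]; field_simp
  have hwle : ‖(twist (V := V) θ p).2.1‖ ≤ 1 + ‖twist (V := V) θ p‖ := by
    have := le_trans (norm_fst_le (twist (V := V) θ p).2) (norm_snd_le (twist (V := V) θ p))
    linarith
  rw [hv]
  apply mul_le_mul (cosh_le_twist θ hθ p) hwle (norm_nonneg _)
  positivity

lemma one_add_norm_le_twist (θ : ℝ) (hθ : θ ≠ 0) (p : ℝ × V × ℝ) :
    1 + ‖p‖ ≤ (3 + 2 * |θ| + (2 + 4 * |θ|) / (2 * |θ|)) * (1 + ‖twist (V := V) θ p‖) ^ 4 := by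
  have hθ' : (0:ℝ) < |θ| := abs_pos.mpr hθ
  set A := 1 + ‖twist (V := V) θ p‖ with hAdef
  have hA1 : (1:ℝ) ≤ A := by
    have := norm_nonneg (twist (V := V) θ p); rw [hAdef]; linarith
  have hA0 : (0:ℝ) < A := by linarith
  have ha : |p.1| ≤ A := by
    have h := norm_fst_le (twist (V := V) θ p)
    rw [twist_fst θ p, Real.norm_eq_abs] at h
    rw [hAdef]; linarith [norm_nonneg (twist (V := V) θ p)]
  have hv : ‖p.2.1‖ ≤ (1 + 2 * |θ|) * A ^ 2 := by
    have := norm_v_le_twist θ hθ p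
    rw [← hAdef] at this
    calc ‖p.2.1‖ ≤ ((1 + 2 * |θ|) * A) * A := this
      _ = (1 + 2 * |θ|) * A ^ 2 := by ring
  have hξ : |p.2.2| ≤ ((2 + 4 * |θ|) / (2 * |θ|)) * A := by
    have h1 : 2 * |θ| * |p.2.2| ≤ Real.exp (2 * |θ| * |p.2.2|) := by
      have := Real.add_one_le_exp (2 * |θ| * |p.2.2|); linarith
    have h2 := exp_le_twist θ hθ p
    rw [← hAdef] at h2
    rw [div_mul_eq_mul_div, le_div_iff₀ (by positivity : (0:ℝ) < 2 * |θ|)]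
    calc |p.2.2| * (2 * |θ|) = 2 * |θ| * |p.2.2| := by ring
      _ ≤ (2 + 4 * |θ|) * A := le_trans h1 h2
  have hnorm : ‖p‖ ≤ |p.1| + (‖p.2.1‖ + |p.2.2|) := by
    have h1 : ‖p‖ = max ‖p.1‖ ‖p.2‖ := Prod.norm_def p
    have h2 : ‖p.2‖ = max ‖p.2.1‖ ‖p.2.2‖ := Prod.norm_def p.2
    rw [h1, h2, Real.norm_eq_abs, Real.norm_eq_abs]
    apply max_le
    · nlinarith [norm_nonneg p.2.1, abs_nonneg p.2.2, abs_nonneg p.1]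
    · apply max_le <;> nlinarith [norm_nonneg p.2.1, abs_nonneg p.2.2, abs_nonneg p.1]
  have h2 : A ≤ A ^ 2 := by nlinarith [mul_nonneg (sub_nonneg.mpr hA1) hA0.le]
  have h21 : (1:ℝ) ≤ A ^ 2 := le_trans hA1 h2
  have e2 : A ^ 2 ≤ A ^ 4 := by nlinarith [mul_nonneg (sub_nonneg.mpr h21) (sq_nonneg A)]
  have e1 : A ≤ A ^ 4 := h2.trans e2
  have e3 : (1:ℝ) ≤ A ^ 4 := le_trans hA1 e1
  set q : ℝ := (2 + 4 * |θ|) / (2 * |θ|) with hqdef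
  have hq0 : (0:ℝ) ≤ q := by rw [hqdef]; positivity
  have t1 : |p.1| ≤ A ^ 4 := ha.trans e1
  have t2 : ‖p.2.1‖ ≤ A ^ 4 + 2 * |θ| * A ^ 4 := by
    have := mul_le_mul_of_nonneg_left e2 (by positivity : (0:ℝ) ≤ 1 + 2 * |θ|)
    nlinarith
  have t3 : |p.2.2| ≤ q * A ^ 4 := by
    have h := mul_le_mul_of_nonneg_left e1 hq0
    exact le_trans hξ h
  have hrhs : (3 + 2 * |θ| + q) * A ^ 4 =
      3 * A ^ 4 + 2 * |θ| * A ^ 4 + q * A ^ 4 := by ring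
  rw [hrhs]
  linarith [t1, t2, t3, e3, hnorm]

end TwistMain


/-- pullback by the twisting map preserves the Schwartz space: for any
Schwartz function `f` in the variables `(a, v, ξ)` with `v ∈ ℝⁿ`, the function
`(a,v,ξ) ↦ f(a, v/cosh(θξ), sinh(2θξ)/(2θ))` is again Schwartz. -/
theorem twist_pullback_schwartz (n : ℕ) (θ : ℝ)
    (f : SchwartzMap (ℝ × EuclideanSpace ℝ (Fin n) × ℝ) ℂ) :
    ∃ g : SchwartzMap (ℝ × EuclideanSpace ℝ (Fin n) × ℝ) ℂ,
      ∀ p, g p = f (twist θ p) := by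
  by_cases hθ : θ = 0
  · subst hθ
    refine ⟨f, fun p => ?_⟩
    have h0 : twist (0:ℝ) p = p := by simp [twist, phiMap]
    rw [h0]
  · set V := EuclideanSpace ℝ (Fin n) with hV
    have htw : ContDiff ℝ ∞ (twist (V := V) θ) := twist_contDiff θ hθ
    refine ⟨⟨fun p => f (twist θ p), f.smooth'.comp htw, ?_⟩, fun p => rfl⟩
    intro k m
    obtain ⟨K, hK1, hK⟩ := twist_iteratedFDeriv_bound (V := V) θ hθ m
    have hθ' : (0:ℝ) < |θ| := abs_pos.mpr hθ
    have hK0 : (0:ℝ) ≤ K := by linarith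
    set c1 : ℝ := 3 + 2 * |θ| + (2 + 4 * |θ|) / (2 * |θ|) with hc1
    set c2 : ℝ := 2 + 4 * |θ| with hc2
    clear_value c1
    clear_value c2
    have hc1p : (0:ℝ) < c1 := by rw [hc1, hc2]; positivity
    have hc2p : (0:ℝ) < c2 := by rw [hc2]; positivity
    set Mf : ℝ := 2 ^ (4*k+5*m) *
      (Finset.Iic (4*k+5*m, m)).sup (fun mm => SchwartzMap.seminorm ℝ mm.1 mm.2) f with hMf
    clear_value Mf
    have hMf0 : (0:ℝ) ≤ Mf := by
      rw [hMf]
      exact mul_nonneg (by positivity) (apply_nonneg _ f)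
    refine ⟨(Nat.factorial m : ℝ) * Mf * K ^ m * c1 ^ (k+m) * c2 ^ m, fun p => ?_⟩
    set A : ℝ := 1 + ‖twist (V := V) θ p‖ with hA
    clear_value A
    have hA0 : (0:ℝ) < A := by rw [hA]; positivity
    have hApow : (0:ℝ) < A ^ (4*k+5*m) := pow_pos hA0 _
    have hC : ∀ i, i ≤ m →
        ‖iteratedFDeriv ℝ i (⇑f) (twist θ p)‖ ≤ Mf * (A ^ (4*k+5*m))⁻¹ := by
      intro i him
      have h := one_add_le_sup_seminorm_apply (𝕜 := ℝ) (m := (4*k+5*m, m)) le_rfl him f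
        (twist θ p)
      rw [← hA] at h
      calc ‖iteratedFDeriv ℝ i (⇑f) (twist θ p)‖
          = (A ^ (4*k+5*m))⁻¹ * (A ^ (4*k+5*m) * ‖iteratedFDeriv ℝ i (⇑f) (twist θ p)‖) := by
            rw [← mul_assoc, inv_mul_cancel₀ (ne_of_gt hApow), one_mul]
        _ ≤ (A ^ (4*k+5*m))⁻¹ * Mf := by
            apply mul_le_mul_of_nonneg_left _ (by positivity)
            rw [hMf]
            exact h
        _ = Mf * (A ^ (4*k+5*m))⁻¹ := mul_comm _ _
    set D : ℝ := K * ((1 + ‖p‖) * Real.exp (2 * |θ| * |p.2.2|)) with hD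
    clear_value D
    have hexp1 : (1:ℝ) ≤ Real.exp (2 * |θ| * |p.2.2|) := Real.one_le_exp (by positivity)
    have hp1 : (1:ℝ) ≤ 1 + ‖p‖ := by linarith [norm_nonneg p]
    have hD1 : (1:ℝ) ≤ D := by
      rw [hD]
      have h1 : (1:ℝ) ≤ (1 + ‖p‖) * Real.exp (2 * |θ| * |p.2.2|) := by
        calc (1:ℝ) ≤ Real.exp (2 * |θ| * |p.2.2|) := hexp1
          _ = 1 * Real.exp (2 * |θ| * |p.2.2|) := (one_mul _).symm
          _ ≤ (1 + ‖p‖) * Real.exp (2 * |θ| * |p.2.2|) :=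
            mul_le_mul_of_nonneg_right hp1 (Real.exp_pos _).le
      calc (1:ℝ) ≤ (1 + ‖p‖) * Real.exp (2 * |θ| * |p.2.2|) := h1
        _ = 1 * ((1 + ‖p‖) * Real.exp (2 * |θ| * |p.2.2|)) := (one_mul _).symm
        _ ≤ K * ((1 + ‖p‖) * Real.exp (2 * |θ| * |p.2.2|)) :=
          mul_le_mul_of_nonneg_right hK1 (by positivity)
    have hDb : ∀ i, 1 ≤ i → i ≤ m →
        ‖iteratedFDeriv ℝ i (twist (V := V) θ) p‖ ≤ D ^ i := by
      intro i h1i him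
      refine le_trans (hK i him p) ?_
      calc K * ((1 + ‖p‖) * Real.exp (2 * |θ| * |p.2.2|)) = D := hD.symm
        _ ≤ D ^ i := le_self_pow₀ hD1 (by omega)
    have hmn : ((m : ℕ) : WithTop ℕ∞) ≤ ∞ := by exact_mod_cast le_top
    have hcomp := norm_iteratedFDeriv_comp_le f.smooth' htw hmn p hC hDb
    have hb1 : 1 + ‖p‖ ≤ c1 * A ^ 4 := by
      rw [hc1, hc2, hA]; exact one_add_norm_le_twist θ hθ p
    have hb2 : Real.exp (2 * |θ| * |p.2.2|) ≤ c2 * A := by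
      rw [hc2, hA]; exact exp_le_twist θ hθ p
    have heq : (fun p : ℝ × V × ℝ => f (twist θ p)) = ⇑f ∘ twist (V := V) θ := rfl
    rw [heq]
    calc ‖p‖ ^ k * ‖iteratedFDeriv ℝ m (⇑f ∘ twist (V := V) θ) p‖
        ≤ (1 + ‖p‖) ^ k * ((Nat.factorial m : ℝ) * (Mf * (A ^ (4*k+5*m))⁻¹) * D ^ m) := by
          apply mul_le_mul (pow_le_pow_left₀ (norm_nonneg p) (by linarith) k) hcomp
            (norm_nonneg _) (by positivity)
      _ = (Nat.factorial m : ℝ) * Mf * ((A ^ (4*k+5*m))⁻¹ *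
            ((1 + ‖p‖) ^ (k+m) * (K ^ m * (Real.exp (2 * |θ| * |p.2.2|)) ^ m))) := by
          rw [hD, mul_pow, mul_pow, pow_add]
          ring
      _ ≤ (Nat.factorial m : ℝ) * Mf * ((A ^ (4*k+5*m))⁻¹ *
            ((c1 * A ^ 4) ^ (k+m) * (K ^ m * (c2 * A) ^ m))) := by
          gcongr
      _ = (Nat.factorial m : ℝ) * Mf * K ^ m * c1 ^ (k+m) * c2 ^ m *
            ((A ^ (4*k+5*m))⁻¹ * A ^ (4*k+5*m)) := by
          rw [mul_pow, mul_pow]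
          ring
      _ = (Nat.factorial m : ℝ) * Mf * K ^ m * c1 ^ (k+m) * c2 ^ m := by
          rw [inv_mul_cancel₀ (ne_of_gt hApow), mul_one]
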